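/- arXiv:2007.01534 — 9 statements merged into one kernel-verified Lean document; each statement's English description precedes it below -/
import Mathlib

section
/- Fix p ∈ [1,2) and λ < 0, set T = −1/(λ(2−p)), and let a(t) = (1 + λ(2−p)t)^{1/(2−p)} for t ∈ [0,T]. For each integer N ≥ 2 define μ_N = (Σ_{k=1}^{N} a(kT/N) · a((k−1)T/N)) / (Σ_{k=1}^{N} a((k−1)T/N)²). Then μ_N > 0 for all N ≥ 2 and lim_{N→∞} (N/T) · log(μ_N) = λ(4−p)/2. -/
open Filter Finset

/-- Upper MVT-type bound for rpow differences, via Bernoulli. -/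
lemma rpow_diff_le_aux {q x : ℝ} (hq : 1 ≤ q) (hx : 0 ≤ x) :
    (x+1)^q - x^q ≤ q * (x+1)^(q-1) := by
  have hx1 : (0:ℝ) < x + 1 := by linarith
  have hs : (-1:ℝ) ≤ -(1/(x+1)) := by
    rw [neg_le_neg_iff, div_le_one hx1]; linarith
  have hB := one_add_mul_self_le_rpow_one_add hs hq
  have h1s : 1 + -(1/(x+1)) = x/(x+1) := by field_simp; ring
  rw [h1s] at hB
  have hmul := mul_le_mul_of_nonneg_right hB (Real.rpow_nonneg hx1.le q)
  have hR : (x/(x+1))^q * (x+1)^q = x^q := by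
    rw [← Real.mul_rpow (div_nonneg hx hx1.le) hx1.le, div_mul_cancel₀ _ hx1.ne']
  rw [hR] at hmul
  have hE : (1 + q * -(1/(x+1))) * (x+1)^q = (x+1)^q - q * ((x+1)^q/(x+1)) := by
    field_simp; ring
  rw [hE] at hmul
  rw [Real.rpow_sub_one hx1.ne' q]
  linarith

/-- Lower MVT-type bound for rpow differences, via Bernoulli. -/
lemma le_rpow_diff_aux {q x : ℝ} (hq : 1 ≤ q) (hx : 1 ≤ x) :
    q * x^(q-1) ≤ (x+1)^q - x^q := by
  have hx0 : (0:ℝ) < x := by linarith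
  have hs : (-1:ℝ) ≤ 1/x := by
    have : (0:ℝ) ≤ 1/x := by positivity
    linarith
  have hB := one_add_mul_self_le_rpow_one_add hs hq
  have h1s : (1:ℝ) + 1/x = (x+1)/x := by field_simp
  rw [h1s] at hB
  have hmul := mul_le_mul_of_nonneg_right hB (Real.rpow_nonneg hx0.le q)
  have hR : ((x+1)/x)^q * x^q = (x+1)^q := by
    rw [Real.div_rpow (by linarith) hx0.le, div_mul_cancel₀]
    exact (Real.rpow_pos_of_pos hx0 q).ne'
  rw [hR] at hmul
  have hE : (1 + q * (1/x)) * x^q = x^q + q * (x^q/x) := by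
    field_simp
  rw [hE] at hmul
  rw [Real.rpow_sub_one hx0.ne' q]
  linarith

lemma sum_low_aux {q : ℝ} (hq : 1 ≤ q) (M : ℕ) :
    (M:ℝ)^(q+1) ≤ (q+1) * ∑ j ∈ range M, ((j:ℝ)+1)^q := by
  have htel := Finset.sum_range_sub (fun j : ℕ => ((j:ℝ))^(q+1)) M
  simp only [Nat.cast_add, Nat.cast_one, Nat.cast_zero] at htel
  rw [Real.zero_rpow (by linarith : q+1 ≠ 0)] at htel
  have key : ∀ j ∈ range M, (((j:ℝ)+1)^(q+1) - (j:ℝ)^(q+1)) ≤ (q+1) * ((j:ℝ)+1)^q := by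
    intro j _
    have h := rpow_diff_le_aux (q := q+1) (x := (j:ℝ)) (by linarith) (Nat.cast_nonneg j)
    simpa using h
  calc (M:ℝ)^(q+1) = ∑ j ∈ range M, (((j:ℝ)+1)^(q+1) - (j:ℝ)^(q+1)) := by
        rw [htel]; ring
    _ ≤ ∑ j ∈ range M, (q+1) * ((j:ℝ)+1)^q := Finset.sum_le_sum key
    _ = (q+1) * ∑ j ∈ range M, ((j:ℝ)+1)^q := by rw [Finset.mul_sum]

lemma sum_high_aux {q : ℝ} (hq : 1 ≤ q) (M : ℕ) :
    (q+1) * ∑ j ∈ range M, ((j:ℝ)+1)^q ≤ ((M:ℝ)+1)^(q+1) := by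
  have htel := Finset.sum_range_sub (fun j : ℕ => ((j:ℝ)+1)^(q+1)) M
  simp only [Nat.cast_add, Nat.cast_one, Nat.cast_zero] at htel
  have key : ∀ j ∈ range M, (q+1) * ((j:ℝ)+1)^q ≤ (((j:ℝ)+1)+1)^(q+1) - ((j:ℝ)+1)^(q+1) := by
    intro j _
    have h := le_rpow_diff_aux (q := q+1) (x := (j:ℝ)+1) (by linarith)
      (by have := Nat.cast_nonneg (α := ℝ) j; linarith)
    simpa using h
  have h1 : (q+1) * ∑ j ∈ range M, ((j:ℝ)+1)^q
      ≤ ∑ j ∈ range M, ((((j:ℝ)+1)+1)^(q+1) - ((j:ℝ)+1)^(q+1)) := by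
    rw [Finset.mul_sum]; exact Finset.sum_le_sum key
  have h2 : ∑ j ∈ range M, ((((j:ℝ)+1)+1)^(q+1) - ((j:ℝ)+1)^(q+1))
      = ((M:ℝ)+1)^(q+1) - 1 := by
    rw [htel]; norm_num
  have h3 : ((M:ℝ)+1)^(q+1) - 1 ≤ ((M:ℝ)+1)^(q+1) := by linarith
  linarith

lemma rpow_tendsto_one_aux {f : ℕ → ℝ} (hf : Tendsto f atTop (nhds 1)) (c : ℝ) :
    Tendsto (fun N => (f N)^c) atTop (nhds 1) := by
  have hc : ContinuousAt (fun x : ℝ => x ^ c) 1 :=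
    Real.continuousAt_rpow_const 1 c (Or.inl one_ne_zero)
  simpa [Real.one_rpow, Function.comp_def] using hc.tendsto.comp hf

lemma t_add_aux : Tendsto (fun N : ℕ => ((N:ℝ)+1)/N) atTop (nhds 1) := by
  have h : Tendsto (fun N : ℕ => 1 + 1/(N:ℝ)) atTop (nhds 1) := by
    simpa using tendsto_const_nhds.add (tendsto_one_div_atTop_nhds_zero_nat (𝕜 := ℝ))
  apply h.congr'
  filter_upwards [eventually_ge_atTop 1] with N hN
  have hN0 : (N:ℝ) ≠ 0 := Nat.cast_ne_zero.mpr (by omega)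
  field_simp

lemma t_sub_aux : Tendsto (fun N : ℕ => ((N:ℝ)-1)/N) atTop (nhds 1) := by
  have h : Tendsto (fun N : ℕ => 1 - 1/(N:ℝ)) atTop (nhds 1) := by
    simpa using tendsto_const_nhds.sub (tendsto_one_div_atTop_nhds_zero_nat (𝕜 := ℝ))
  apply h.congr'
  filter_upwards [eventually_ge_atTop 1] with N hN
  have hN0 : (N:ℝ) ≠ 0 := Nat.cast_ne_zero.mpr (by omega)
  field_simp

lemma den_lim_aux {α : ℝ} (hα : 1 ≤ α) :
    Tendsto (fun N : ℕ => (∑ j ∈ range N, ((j:ℝ)+1)^(2*α)) / (N:ℝ)^(2*α+1)) atTop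
      (nhds (1/(2*α+1))) := by
  have hq : (1:ℝ) ≤ 2*α := by linarith
  have h2 : (0:ℝ) < 2*α+1 := by linarith
  apply tendsto_of_tendsto_of_tendsto_of_le_of_le'
      (g := fun _ : ℕ => 1/(2*α+1))
      (h := fun N : ℕ => (((N:ℝ)+1)/N)^(2*α+1)/(2*α+1))
  · exact tendsto_const_nhds
  · simpa using (rpow_tendsto_one_aux t_add_aux (2*α+1)).div_const (2*α+1)
  · filter_upwards [eventually_ge_atTop 1] with N hN
    have hN0 : (0:ℝ) < N := by exact_mod_cast Nat.pos_of_ne_zero (by omega)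
    have hNp : (0:ℝ) < (N:ℝ)^(2*α+1) := Real.rpow_pos_of_pos hN0 _
    rw [div_le_div_iff₀ h2 hNp]
    have := sum_low_aux hq N
    nlinarith
  · filter_upwards [eventually_ge_atTop 1] with N hN
    have hN0 : (0:ℝ) < N := by exact_mod_cast Nat.pos_of_ne_zero (by omega)
    have hNp : (0:ℝ) < (N:ℝ)^(2*α+1) := Real.rpow_pos_of_pos hN0 _
    rw [Real.div_rpow (by positivity) hN0.le, div_div, div_le_div_iff₀ hNp (by positivity)]
    have h := sum_high_aux hq N
    have hNp1 : (0:ℝ) ≤ ((N:ℝ)+1)^(2*α+1) := by positivity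
    nlinarith

lemma E_lim_aux {α : ℝ} (hα : 1 ≤ α) :
    Tendsto (fun N : ℕ =>
        (∑ j ∈ range N, ((j:ℝ)+1)^α * (((j:ℝ)+1)^α - (j:ℝ)^α)) / (N:ℝ)^(2*α)) atTop
      (nhds (1/2)) := by
  have hq : (1:ℝ) ≤ 2*α - 1 := by linarith
  have hq1 : (2*α - 1) + 1 = 2*α := by ring
  apply tendsto_of_tendsto_of_tendsto_of_le_of_le'
      (g := fun N : ℕ => (((N:ℝ)-1)/N)^(2*α)/2)
      (h := fun N : ℕ => (((N:ℝ)+1)/N)^(2*α)/2)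
  · simpa using (rpow_tendsto_one_aux t_sub_aux (2*α)).div_const 2
  · simpa using (rpow_tendsto_one_aux t_add_aux (2*α)).div_const 2
  · -- lower bound
    filter_upwards [eventually_ge_atTop 1] with N hN
    obtain ⟨M, rfl⟩ : ∃ M, N = M + 1 := ⟨N - 1, by omega⟩
    have hN0 : (0:ℝ) < (M:ℝ)+1 := by positivity
    have hNp : (0:ℝ) < ((M:ℝ)+1)^(2*α) := Real.rpow_pos_of_pos hN0 _
    -- E ≥ α * ∑_{j ∈ range (M+1)} j^{2α-1}
    have step1 : ∀ j ∈ range (M+1),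
        α * (j:ℝ)^(2*α-1) ≤ ((j:ℝ)+1)^α * (((j:ℝ)+1)^α - (j:ℝ)^α) := by
      intro j _
      rcases Nat.eq_zero_or_pos j with hj | hj
      · subst hj
        simp only [Nat.cast_zero]
        rw [Real.zero_rpow (by linarith : 2*α-1 ≠ 0), Real.zero_rpow (by linarith : α ≠ 0)]
        norm_num
      · have hj1 : (1:ℝ) ≤ (j:ℝ) := by exact_mod_cast hj
        have hj0 : (0:ℝ) < (j:ℝ) := by linarith
        have h1 : α * (j:ℝ)^(α-1) ≤ ((j:ℝ)+1)^α - (j:ℝ)^α := le_rpow_diff_aux hα hj1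
        have h2 : (j:ℝ)^α * (α * (j:ℝ)^(α-1)) ≤ (j:ℝ)^α * (((j:ℝ)+1)^α - (j:ℝ)^α) :=
          mul_le_mul_of_nonneg_left h1 (Real.rpow_nonneg hj0.le α)
        have h3 : (j:ℝ)^α * (((j:ℝ)+1)^α - (j:ℝ)^α)
            ≤ ((j:ℝ)+1)^α * (((j:ℝ)+1)^α - (j:ℝ)^α) := by
          apply mul_le_mul_of_nonneg_right
          · exact Real.rpow_le_rpow hj0.le (by linarith) (by linarith)
          · have := Real.rpow_le_rpow hj0.le (by linarith : (j:ℝ) ≤ (j:ℝ)+1) (by linarith : (0:ℝ) ≤ α)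
            linarith
        have h4 : (j:ℝ)^α * (α * (j:ℝ)^(α-1)) = α * (j:ℝ)^(2*α-1) := by
          rw [← mul_assoc, mul_comm ((j:ℝ)^α) α, mul_assoc, ← Real.rpow_add hj0]
          ring_nf
        linarith [h4 ▸ h2]
    have step2 : α * ∑ j ∈ range (M+1), (j:ℝ)^(2*α-1)
        ≤ ∑ j ∈ range (M+1), ((j:ℝ)+1)^α * (((j:ℝ)+1)^α - (j:ℝ)^α) := by
      rw [Finset.mul_sum]; exact Finset.sum_le_sum step1
    have hshift : ∑ j ∈ range (M+1), (j:ℝ)^(2*α-1)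
        = ∑ j ∈ range M, ((j:ℝ)+1)^(2*α-1) := by
      rw [Finset.sum_range_succ']
      simp only [Nat.cast_zero, Nat.cast_add, Nat.cast_one]
      rw [Real.zero_rpow (by linarith : 2*α-1 ≠ 0)]
      ring
    have step3 : (M:ℝ)^(2*α) ≤ (2*α) * ∑ j ∈ range M, ((j:ℝ)+1)^(2*α-1) := by
      have := sum_low_aux hq M
      rw [hq1] at this; exact this
    -- combine: E ≥ α * (M^{2α}/(2α)) = M^{2α}/2
    have hE_lb : (M:ℝ)^(2*α)/2
        ≤ ∑ j ∈ range (M+1), ((j:ℝ)+1)^α * (((j:ℝ)+1)^α - (j:ℝ)^α) := by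
      rw [hshift] at step2
      nlinarith [step2, step3]
    -- now divide
    have hcast : ((M+1 : ℕ):ℝ) = (M:ℝ)+1 := by push_cast; ring
    rw [hcast]
    have hMc : ((M:ℝ)+1) - 1 = (M:ℝ) := by ring
    rw [hMc, Real.div_rpow (Nat.cast_nonneg M) hN0.le, div_div, div_le_div_iff₀ (by positivity) hNp]
    nlinarith [hE_lb, hNp.le]
  · -- upper bound
    filter_upwards [eventually_ge_atTop 1] with N hN
    have hN0 : (0:ℝ) < N := by exact_mod_cast Nat.pos_of_ne_zero (by omega)
    have hNp : (0:ℝ) < (N:ℝ)^(2*α) := Real.rpow_pos_of_pos hN0 _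
    have step1 : ∀ j ∈ range N,
        ((j:ℝ)+1)^α * (((j:ℝ)+1)^α - (j:ℝ)^α) ≤ α * ((j:ℝ)+1)^(2*α-1) := by
      intro j _
      have hj1 : (0:ℝ) < (j:ℝ)+1 := by positivity
      have h1 : ((j:ℝ)+1)^α - (j:ℝ)^α ≤ α * ((j:ℝ)+1)^(α-1) :=
        rpow_diff_le_aux hα (Nat.cast_nonneg j)
      have h2 : ((j:ℝ)+1)^α * (((j:ℝ)+1)^α - (j:ℝ)^α)
          ≤ ((j:ℝ)+1)^α * (α * ((j:ℝ)+1)^(α-1)) :=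
        mul_le_mul_of_nonneg_left h1 (Real.rpow_nonneg hj1.le α)
      have h3 : ((j:ℝ)+1)^α * (α * ((j:ℝ)+1)^(α-1)) = α * ((j:ℝ)+1)^(2*α-1) := by
        rw [← mul_assoc, mul_comm (((j:ℝ)+1)^α) α, mul_assoc, ← Real.rpow_add hj1]
        ring_nf
      linarith [h3 ▸ h2]
    have step2 : ∑ j ∈ range N, ((j:ℝ)+1)^α * (((j:ℝ)+1)^α - (j:ℝ)^α)
        ≤ α * ∑ j ∈ range N, ((j:ℝ)+1)^(2*α-1) := by
      rw [Finset.mul_sum]; exact Finset.sum_le_sum step1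
    have step3 : (2*α) * ∑ j ∈ range N, ((j:ℝ)+1)^(2*α-1) ≤ ((N:ℝ)+1)^(2*α) := by
      have := sum_high_aux hq N
      rw [hq1] at this; exact this
    have hE_ub : ∑ j ∈ range N, ((j:ℝ)+1)^α * (((j:ℝ)+1)^α - (j:ℝ)^α)
        ≤ ((N:ℝ)+1)^(2*α)/2 := by nlinarith [step2, step3]
    rw [Real.div_rpow (by positivity) hN0.le, div_div, div_le_div_iff₀ hNp (by positivity)]
    nlinarith [hE_ub, hNp.le]

lemma reindex_aux (G : ℕ → ℝ) (N : ℕ) :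
    ∑ k ∈ Finset.Icc 1 N, G (N - k) = ∑ j ∈ Finset.range N, G j := by
  rw [← Finset.Ico_add_one_right_eq_Icc, Finset.sum_Ico_eq_sum_range]
  simp only [Nat.succ_sub_one, Nat.add_sub_cancel]
  have h : ∀ i ∈ Finset.range N, G (N - (1+i)) = G (N - 1 - i) := by
    intro i _; congr 1; omega
  rw [Finset.sum_congr rfl h, Finset.sum_range_reflect]

/-- For the decay profile `a(t) = (1+λ(2−p)t)^{1/(2−p)}` on `[0,T]`,
`T = −1/(λ(2−p))`, the discrete DMD eigenvalue `μ_N` obtained from `N`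
uniform samples is positive, and the continuous-time DMD eigenvalue
`(N/T)·log μ_N` converges to `λ(4−p)/2` as `N → ∞`. -/
theorem stmt1 (p lam T : ℝ) (hp1 : 1 ≤ p) (hp2 : p < 2) (hlam : lam < 0)
    (hT : T = -1 / (lam * (2 - p)))
    (a : ℝ → ℝ) (ha : ∀ t : ℝ, a t = (1 + lam * (2 - p) * t) ^ ((1 : ℝ) / (2 - p)))
    (μ : ℕ → ℝ)
    (hμ : ∀ N : ℕ, μ N =
      (∑ k ∈ Finset.Icc 1 N, a ((k : ℝ) * T / N) * a (((k : ℝ) - 1) * T / N)) /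
      (∑ k ∈ Finset.Icc 1 N, (a (((k : ℝ) - 1) * T / N)) ^ 2)) :
    (∀ N : ℕ, 2 ≤ N → 0 < μ N) ∧
    Tendsto (fun N : ℕ => ((N : ℝ) / T) * Real.log (μ N)) atTop
      (nhds (lam * (4 - p) / 2)) := by
  have h2p : (0:ℝ) < 2 - p := by linarith
  set α : ℝ := 1/(2-p) with hαdef
  have hα : 1 ≤ α := by rw [hαdef, le_div_iff₀ h2p]; linarith
  have hα0 : (0:ℝ) < α := by linarith
  have hc : lam * (2-p) < 0 := mul_neg_of_neg_of_pos hlam h2p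
  have hc0 : lam * (2-p) ≠ 0 := hc.ne
  have hcT : lam*(2-p) * T = -1 := by rw [hT]; field_simp; rw [div_self hlam.ne]
  set S : ℕ → ℝ := fun N => ∑ j ∈ Finset.range N, (j:ℝ)^α * ((j:ℝ)+1)^α with hSdef
  set D : ℕ → ℝ := fun N => ∑ j ∈ Finset.range N, ((j:ℝ)+1)^(2*α) with hDdef
  set E : ℕ → ℝ := fun N => ∑ j ∈ Finset.range N, ((j:ℝ)+1)^α * (((j:ℝ)+1)^α - (j:ℝ)^α)
    with hEdef
  -- rewrite μ
  have hμ' : ∀ N : ℕ, 1 ≤ N → μ N = S N / D N := by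
    intro N hN
    have hN0 : (0:ℝ) < N := by exact_mod_cast hN
    have hNα : (0:ℝ) < (N:ℝ)^α := Real.rpow_pos_of_pos hN0 α
    have hCpos : 0 < (N:ℝ)^α * (N:ℝ)^α := by positivity
    have e2 : ∀ k ∈ Finset.Icc 1 N,
        a (((k:ℝ)-1)*T/N) = (((N-k : ℕ):ℝ)+1)^α/(N:ℝ)^α := by
      intro k hk
      obtain ⟨hk1, hk2⟩ := Finset.mem_Icc.mp hk
      have hkN : (k:ℝ) ≤ N := by exact_mod_cast hk2
      have harg : 1 + lam*(2-p)*(((k:ℝ)-1)*T/N) = ((N:ℝ)-(k:ℝ)+1)/N := by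
        field_simp
        linear_combination ((k:ℝ)-1)*hcT
      rw [ha, harg, Real.div_rpow (by linarith) hN0.le, Nat.cast_sub hk2]
    have e1 : ∀ k ∈ Finset.Icc 1 N,
        a ((k:ℝ)*T/N) = ((N-k : ℕ):ℝ)^α/(N:ℝ)^α := by
      intro k hk
      obtain ⟨hk1, hk2⟩ := Finset.mem_Icc.mp hk
      have hkN : (k:ℝ) ≤ N := by exact_mod_cast hk2
      have harg : 1 + lam*(2-p)*((k:ℝ)*T/N) = ((N:ℝ)-(k:ℝ))/N := by
        field_simp
        linear_combination (k:ℝ)*hcT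
      rw [ha, harg, Real.div_rpow (by linarith) hN0.le, Nat.cast_sub hk2]
    have hnum : (∑ k ∈ Finset.Icc 1 N, a ((k:ℝ)*T/N) * a (((k:ℝ)-1)*T/N))
        = (∑ k ∈ Finset.Icc 1 N, ((N-k:ℕ):ℝ)^α * (((N-k:ℕ):ℝ)+1)^α)
          / ((N:ℝ)^α * (N:ℝ)^α) := by
      rw [Finset.sum_div]
      refine Finset.sum_congr rfl fun k hk => ?_
      rw [e1 k hk, e2 k hk, div_mul_div_comm]
    have hden : (∑ k ∈ Finset.Icc 1 N, (a (((k:ℝ)-1)*T/N))^2)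
        = (∑ k ∈ Finset.Icc 1 N, (((N-k:ℕ):ℝ)+1)^(2*α)) / ((N:ℝ)^α * (N:ℝ)^α) := by
      rw [Finset.sum_div]
      refine Finset.sum_congr rfl fun k hk => ?_
      rw [e2 k hk, div_pow]
      congr 1
      · rw [sq, ← Real.rpow_add (by positivity)]; ring_nf
      · rw [sq]
    have hre1 : (∑ k ∈ Finset.Icc 1 N, ((N-k:ℕ):ℝ)^α * (((N-k:ℕ):ℝ)+1)^α) = S N :=
      reindex_aux (fun j => (j:ℝ)^α * ((j:ℝ)+1)^α) N
    have hre2 : (∑ k ∈ Finset.Icc 1 N, (((N-k:ℕ):ℝ)+1)^(2*α)) = D N :=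
      reindex_aux (fun j => ((j:ℝ)+1)^(2*α)) N
    rw [hμ N, hnum, hden, hre1, hre2, div_div_div_comm, div_self hCpos.ne', div_one]
  -- positivity
  have hpos : ∀ N : ℕ, 2 ≤ N → 0 < μ N := by
    intro N hN
    rw [hμ' N (by omega)]
    apply div_pos
    · apply Finset.sum_pos'
      · intro j _; positivity
      · refine ⟨1, Finset.mem_range.mpr (by omega), ?_⟩
        norm_num
        positivity
    · apply Finset.sum_pos
      · intro j _; positivity
      · exact ⟨0, Finset.mem_range.mpr (by omega)⟩
  refine ⟨hpos, ?_⟩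
  -- S - D = -E
  have hSD : ∀ N : ℕ, S N - D N = -(E N) := by
    intro N
    rw [hSdef, hDdef, hEdef]
    simp only
    rw [← Finset.sum_sub_distrib, ← Finset.sum_neg_distrib]
    refine Finset.sum_congr rfl fun j _ => ?_
    have h2 : ((j:ℝ)+1)^(2*α) = ((j:ℝ)+1)^α * ((j:ℝ)+1)^α := by
      rw [← Real.rpow_add (by positivity)]; ring_nf
    rw [h2]; ring
  have hDpos : ∀ N : ℕ, 1 ≤ N → 0 < D N := by
    intro N hN
    apply Finset.sum_pos
    · intro j _; positivity
    · exact ⟨0, Finset.mem_range.mpr (by omega)⟩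
  -- key limit : N (μ N - 1) → -(2α+1)/2
  have hNμ : Tendsto (fun N : ℕ => (N:ℝ)*(μ N - 1)) atTop (nhds (-(2*α+1)/2)) := by
    have h1 : (1/(2*α+1) : ℝ) ≠ 0 := by positivity
    have ht := ((E_lim_aux hα).div (den_lim_aux hα) h1).neg
    have hval : -((1/2 : ℝ)/(1/(2*α+1))) = -(2*α+1)/2 := by
      have h2 : (2*α+1 : ℝ) ≠ 0 := by positivity
      field_simp
    rw [hval] at ht
    apply ht.congr'
    filter_upwards [eventually_ge_atTop 1] with N hN
    have hN0 : (0:ℝ) < N := by exact_mod_cast hN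
    have hD0 := hDpos N hN
    have hB : (N:ℝ)^(2*α+1) = (N:ℝ)^(2*α) * N := by rw [Real.rpow_add hN0, Real.rpow_one]
    have hE' : E N = D N - S N := by have := hSD N; linarith
    have hA0 : ((N:ℝ)^(2*α)) ≠ 0 := (Real.rpow_pos_of_pos hN0 _).ne'
    show -((E N/(N:ℝ)^(2*α)) / (D N/(N:ℝ)^(2*α+1))) = (N:ℝ)*(μ N - 1)
    rw [hμ' N hN, hE', hB, div_div_div_comm, div_mul_cancel_left₀ hA0, div_inv_eq_mul,
      sub_div, div_self hD0.ne']
    ring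
  -- μ → 1
  have hμ1 : Tendsto μ atTop (nhds 1) := by
    have h0 := hNμ.mul tendsto_one_div_atTop_nhds_zero_nat
    have h2 : Tendsto (fun N : ℕ => (N:ℝ)*(μ N - 1) * (1/(N:ℝ)) + 1) atTop (nhds 1) := by
      simpa using h0.add (tendsto_const_nhds (x := (1:ℝ)))
    apply h2.congr'
    filter_upwards [eventually_ge_atTop 1] with N hN
    have hN0 : (N:ℝ) ≠ 0 := Nat.cast_ne_zero.mpr (by omega)
    field_simp; ring
  -- squeeze for N log μ
  have hlow : Tendsto (fun N : ℕ => (N:ℝ)*(μ N - 1) * (μ N)⁻¹) atTop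
      (nhds (-(2*α+1)/2)) := by
    have := hNμ.mul (hμ1.inv₀ one_ne_zero)
    simpa using this
  have hNlog : Tendsto (fun N : ℕ => (N:ℝ) * Real.log (μ N)) atTop
      (nhds (-(2*α+1)/2)) := by
    apply tendsto_of_tendsto_of_tendsto_of_le_of_le' hlow hNμ
    · filter_upwards [eventually_ge_atTop 2] with N hN
      have hμp := hpos N hN
      have h1 : 1 - (μ N)⁻¹ ≤ Real.log (μ N) := by
        have h := Real.log_le_sub_one_of_pos (inv_pos.mpr hμp)
        rw [Real.log_inv] at h; linarith
      have heq : (μ N - 1) * (μ N)⁻¹ = 1 - (μ N)⁻¹ := by field_simp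
      calc (N:ℝ)*(μ N - 1)*(μ N)⁻¹ = (N:ℝ)*((μ N - 1)*(μ N)⁻¹) := by ring
        _ = (N:ℝ)*(1 - (μ N)⁻¹) := by rw [heq]
        _ ≤ (N:ℝ)*Real.log (μ N) := mul_le_mul_of_nonneg_left h1 (Nat.cast_nonneg N)
    · filter_upwards [eventually_ge_atTop 2] with N hN
      exact mul_le_mul_of_nonneg_left (Real.log_le_sub_one_of_pos (hpos N hN))
        (Nat.cast_nonneg N)
  -- conclude
  have hfin := hNlog.const_mul (1/T)
  have hval : (1/T) * (-(2*α+1)/2) = lam*(4-p)/2 := by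
    rw [hT, hαdef]
    field_simp
    ring
  rw [hval] at hfin
  apply hfin.congr
  intro N
  ring
end

section
/- Fix p ∈ [1,2) and λ < 0, set T = −1/(λ(2−p)), and let a(t) = (1 + λ(2−p)t)^{1/(2−p)} for t ∈ [0,T]. For each integer N ≥ 2, writing a_k = a(kT/N) for k = 0,…,N, define ERR_N = Σ_{k=1}^{N} a_k² − (Σ_{k=1}^{N} a_k a_{k−1})² / (Σ_{k=1}^{N} a_{k−1}²). Then lim_{N→∞} ERR_N = 0. -/
open Filter

/-- `x^α - y^α ≤ α (x - y)` for `0 ≤ y ≤ x ≤ 1` and `α ≥ 1`. -/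
lemma stmt3_key (α x y : ℝ) (hα : 1 ≤ α) (hy : 0 ≤ y) (hxy : y ≤ x) (hx : x ≤ 1) :
    x ^ α - y ^ α ≤ α * (x - y) := by
  rcases eq_or_lt_of_le (hy.trans hxy) with h0 | hxpos
  · have hy0 : y = 0 := le_antisymm (h0 ▸ hxy) hy
    have hx0 : x = 0 := h0.symm
    simp [hx0, hy0, Real.zero_rpow (by positivity : α ≠ 0)]
  · set t : ℝ := y / x with htdef
    have ht0 : 0 ≤ t := div_nonneg hy hxpos.le
    have ht1 : t ≤ 1 := div_le_one_of_le₀ hxy hxpos.le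
    have hber : 1 + α * (t - 1) ≤ t ^ α := by
      have h := one_add_mul_self_le_rpow_one_add (by linarith : (-1:ℝ) ≤ t - 1) hα
      rwa [show (1:ℝ) + (t - 1) = t from by ring] at h
    have hyx : y = t * x := (div_mul_cancel₀ y hxpos.ne').symm
    have hyα : y ^ α = t ^ α * x ^ α := by
      rw [hyx, Real.mul_rpow ht0 hxpos.le]
    have hxα : x ^ α ≤ x := by
      calc x ^ α ≤ x ^ (1:ℝ) := Real.rpow_le_rpow_of_exponent_ge hxpos hx hα
      _ = x := Real.rpow_one x
    have hxαnn : 0 ≤ x ^ α := Real.rpow_nonneg hxpos.le α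
    have htα1 : t ^ α ≤ 1 := Real.rpow_le_one ht0 ht1 (by linarith)
    have h1 : x ^ α * (1 - t ^ α) ≤ x ^ α * (α * (1 - t)) :=
      mul_le_mul_of_nonneg_left (by linarith) hxαnn
    have h2 : x ^ α * (α * (1 - t)) ≤ x * (α * (1 - t)) :=
      mul_le_mul_of_nonneg_right hxα (by nlinarith)
    have hxt : x * (α * (1 - t)) = α * (x - y) := by rw [hyx]; ring
    nlinarith [h1, h2]

/-- DMD paradox, part 1: the one-dimensional DMD least-squares error
`ERR_N = Σ a_k² − (Σ a_k a_{k−1})²/(Σ a_{k−1}²)` for `N` uniform samples of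
the decay profile `a(t) = (1+λ(2−p)t)^{1/(2−p)}` on `[0,T]` tends to `0`
as `N → ∞`. -/
theorem stmt3 (p lam T : ℝ) (hp1 : 1 ≤ p) (hp2 : p < 2) (hlam : lam < 0)
    (hT : T = -1 / (lam * (2 - p)))
    (a : ℝ → ℝ) (ha : ∀ t : ℝ, a t = (1 + lam * (2 - p) * t) ^ ((1 : ℝ) / (2 - p)))
    (ERR : ℕ → ℝ)
    (hERR : ∀ N : ℕ, ERR N =
      (∑ k ∈ Finset.Icc 1 N, (a ((k : ℝ) * T / N)) ^ 2) -
      (∑ k ∈ Finset.Icc 1 N, a ((k : ℝ) * T / N) * a (((k : ℝ) - 1) * T / N)) ^ 2 /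
      (∑ k ∈ Finset.Icc 1 N, (a (((k : ℝ) - 1) * T / N)) ^ 2)) :
    Tendsto (fun N : ℕ => ERR N) atTop (nhds 0) := by
  have h2p : (0:ℝ) < 2 - p := by linarith
  set α : ℝ := (1:ℝ) / (2 - p) with hαdef
  have hα1 : 1 ≤ α := by rw [hαdef, le_div_iff₀ h2p]; linarith
  have hcne : lam * (2 - p) ≠ 0 := ne_of_lt (mul_neg_of_neg_of_pos hlam h2p)
  have hcT : lam * (2 - p) * T = -1 := by rw [hT]; field_simp; rw [div_self hlam.ne]
  have hmain : ∀ N : ℕ, 1 ≤ N → 0 ≤ ERR N ∧ ERR N ≤ α ^ 2 / N := by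
    intro N hN
    have hNpos : (0:ℝ) < N := by exact_mod_cast hN
    have hval : ∀ x : ℝ, a (x * T / N) = (1 - x / N) ^ α := by
      intro x
      rw [ha]
      congr 1
      have h : lam * (2 - p) * (x * T / N) = lam * (2 - p) * T * (x / N) := by ring
      rw [h, hcT]; ring
    set u : ℕ → ℝ := fun k => (1 - ((k:ℝ) - 1) / N) ^ α with hu
    set v : ℕ → ℝ := fun k => (1 - (k:ℝ) / N) ^ α with hv
    have hERRN : ERR N = (∑ k ∈ Finset.Icc 1 N, v k ^ 2) -
        (∑ k ∈ Finset.Icc 1 N, v k * u k) ^ 2 / (∑ k ∈ Finset.Icc 1 N, u k ^ 2) := by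
      rw [hERR]
      simp only [hval, hu, hv]
    set S1 := ∑ k ∈ Finset.Icc 1 N, v k ^ 2 with hS1def
    set S2 := ∑ k ∈ Finset.Icc 1 N, v k * u k with hS2def
    set S0 := ∑ k ∈ Finset.Icc 1 N, u k ^ 2 with hS0def
    have hk : ∀ k ∈ Finset.Icc 1 N,
        0 ≤ v k ∧ v k ≤ u k ∧ u k ≤ 1 ∧ u k - v k ≤ α / N := by
      intro k hkmem
      obtain ⟨hk1, hk2⟩ := Finset.mem_Icc.mp hkmem
      have hk1' : (1:ℝ) ≤ (k:ℝ) := by exact_mod_cast hk1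
      have hk2' : (k:ℝ) ≤ (N:ℝ) := by exact_mod_cast hk2
      have hb1 : 0 ≤ 1 - (k:ℝ)/N := by
        rw [sub_nonneg, div_le_one hNpos]; exact hk2'
      have hb0nn : 0 ≤ ((k:ℝ)-1)/N := div_nonneg (by linarith) hNpos.le
      have hb0 : 1 - ((k:ℝ)-1)/N ≤ 1 := by linarith
      have hble : 1 - (k:ℝ)/N ≤ 1 - ((k:ℝ)-1)/N := by
        have : ((k:ℝ)-1)/N ≤ (k:ℝ)/N := by gcongr; linarith
        linarith
      have hαnn : (0:ℝ) ≤ α := by linarith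
      refine ⟨Real.rpow_nonneg hb1 α, Real.rpow_le_rpow hb1 hble hαnn,
        Real.rpow_le_one (hb1.trans hble) hb0 hαnn, ?_⟩
      have hkey := stmt3_key α (1 - ((k:ℝ)-1)/N) (1 - (k:ℝ)/N) hα1 hb1 hble hb0
      have hdiff : (1 - ((k:ℝ)-1)/N) - (1 - (k:ℝ)/N) = 1/N := by
        field_simp; ring
      rw [hdiff] at hkey
      calc u k - v k ≤ α * (1/N) := hkey
      _ = α / N := by ring
    have h1mem : 1 ∈ Finset.Icc 1 N := Finset.mem_Icc.mpr ⟨le_refl 1, hN⟩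
    have hu1 : u 1 ^ 2 = 1 := by
      simp [hu, Real.one_rpow]
    have hS0ge : 1 ≤ S0 := by
      have h := Finset.single_le_sum (f := fun k => u k ^ 2)
        (fun k _ => sq_nonneg _) h1mem
      simpa [hu1] using h
    have hS0pos : 0 < S0 := by linarith
    have hCS : S2 ^ 2 ≤ S1 * S0 := Finset.sum_mul_sq_le_sq_mul_sq _ v u
    constructor
    · rw [hERRN, sub_nonneg, div_le_iff₀ hS0pos]
      exact hCS
    · have hsq : ∑ k ∈ Finset.Icc 1 N, (u k - v k) ^ 2 ≤ α ^ 2 / N := by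
        have hterm : ∀ k ∈ Finset.Icc 1 N, (u k - v k) ^ 2 ≤ (α / N) ^ 2 := by
          intro k hkmem
          obtain ⟨h0, h1, _, h3⟩ := hk k hkmem
          exact pow_le_pow_left₀ (by linarith) h3 2
        calc ∑ k ∈ Finset.Icc 1 N, (u k - v k) ^ 2
            ≤ ∑ _k ∈ Finset.Icc 1 N, (α / N) ^ 2 := Finset.sum_le_sum hterm
          _ = (N : ℝ) * (α / N) ^ 2 := by
              rw [Finset.sum_const, Nat.card_Icc]; simp [nsmul_eq_mul]
          _ = α ^ 2 / N := by field_simp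
      have hexp : S1 - 2 * S2 + S0 = ∑ k ∈ Finset.Icc 1 N, (u k - v k) ^ 2 := by
        rw [hS1def, hS2def, hS0def, Finset.mul_sum, ← Finset.sum_sub_distrib,
          ← Finset.sum_add_distrib]
        exact Finset.sum_congr rfl (fun k _ => by ring)
      have hdiv : 2 * S2 - S0 ≤ S2 ^ 2 / S0 := by
        rw [le_div_iff₀ hS0pos]
        nlinarith [sq_nonneg (S2 - S0)]
      rw [hERRN]
      linarith
  refine squeeze_zero' ?_ ?_ (tendsto_const_div_atTop_nhds_zero_nat (α ^ 2))
  · exact eventually_atTop.mpr ⟨1, fun N hN => (hmain N hN).1⟩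
  · exact eventually_atTop.mpr ⟨1, fun N hN => (hmain N hN).2⟩
end

section
/- Fix p ∈ [1,2) and λ < 0, set T = −1/(λ(2−p)), and let a(t) = (1 + λ(2−p)t)^{1/(2−p)} for t ∈ [0,T]. Then ∫₀ᵀ ( a(t) − e^{λ(4−p)t/2} )² dt ≥ B, where B := (−1/(λ(4−p))) · (1 − √(1 − e^{−(4−p)/(2−p)}))², and moreover B > 0. -/
/-- DMD paradox, core estimate: the time-continuous reconstruction error
between the decay profile `a(t) = (1+λ(2−p)t)^{1/(2−p)}` and the DMD
reconstruction `e^{λ(4−p)t/2}` over `[0,T]`, `T = −1/(λ(2−p))`, is bounded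
below by the strictly positive constant
`B = (−1/(λ(4−p)))·(1 − √(1 − e^{−(4−p)/(2−p)}))²`. -/
theorem stmt4 (p lam T : ℝ) (hp1 : 1 ≤ p) (hp2 : p < 2) (hlam : lam < 0)
    (hT : T = -1 / (lam * (2 - p)))
    (a : ℝ → ℝ) (ha : ∀ t : ℝ, a t = (1 + lam * (2 - p) * t) ^ ((1 : ℝ) / (2 - p)))
    (B : ℝ)
    (hB : B = (-1 / (lam * (4 - p))) *
      (1 - Real.sqrt (1 - Real.exp (-(4 - p) / (2 - p)))) ^ 2) :
    B ≤ ∫ t in (0 : ℝ)..T, (a t - Real.exp (lam * (4 - p) * t / 2)) ^ 2 ∧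
    0 < B := by
  have haf : a = fun t : ℝ => (1 + lam * (2 - p) * t) ^ ((1 : ℝ) / (2 - p)) :=
    funext ha
  subst haf
  have h2p : (0:ℝ) < 2 - p := by linarith
  have h4p : (0:ℝ) < 4 - p := by linarith
  set c : ℝ := lam * (2 - p) with hc_def
  have hc : c < 0 := mul_neg_of_neg_of_pos hlam h2p
  have hcne : c ≠ 0 := ne_of_lt hc
  set k : ℝ := lam * (4 - p) with hk_def
  have hk : k < 0 := mul_neg_of_neg_of_pos hlam h4p
  have hkne : k ≠ 0 := ne_of_lt hk
  set s : ℝ := (4 - p) / (2 - p) with hs_def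
  have hs2 : (2:ℝ) ≤ s := by
    rw [hs_def, le_div_iff₀ h2p]; linarith
  have hcs : c * s = k := by
    rw [hc_def, hs_def, hk_def]; field_simp
  have hTpos : 0 < T := by
    rw [hT, neg_div]
    exact neg_pos.mpr (div_neg_of_pos_of_neg one_pos hc)
  have hcT : c * T = -1 := by
    rw [hT]; field_simp
  have hkT : k * T = -s := by
    rw [hT, ← hcs]; field_simp
  have huIcc : Set.uIcc (0:ℝ) T = Set.Icc 0 T := Set.uIcc_of_le hTpos.le
  have hbase : ∀ t ∈ Set.uIcc (0:ℝ) T, 0 ≤ 1 + c * t := by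
    intro t ht
    rw [huIcc] at ht
    have h1 : c * T ≤ c * t := mul_le_mul_of_nonpos_left ht.2 hc.le
    rw [hcT] at h1
    linarith
  set M : ℝ := -1 / k with hM_def
  have hM : 0 < M := by
    rw [hM_def, neg_div]
    exact neg_pos.mpr (div_neg_of_pos_of_neg one_pos hk)
  -- the integral of a(t)^2
  have hq2 : (1:ℝ)/(2-p) + 1/(2-p) = s - 1 := by
    rw [hs_def]; field_simp; ring
  have hX : (∫ t in (0:ℝ)..T, ((1 + c * t) ^ ((1:ℝ)/(2-p)))^2) = M := by
    have hEq : Set.EqOn (fun t : ℝ => ((1 + c * t) ^ ((1:ℝ)/(2-p)))^2)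
        (fun t : ℝ => (1 + c * t) ^ (s - 1)) (Set.uIcc 0 T) := by
      intro t ht
      simp only
      rw [sq, ← Real.rpow_add' (hbase t ht) (by rw [hq2]; linarith), hq2]
    rw [intervalIntegral.integral_congr hEq]
    have hderiv : ∀ t ∈ Set.uIcc (0:ℝ) T,
        HasDerivAt (fun t : ℝ => (1 + c * t) ^ s / k) ((1 + c * t) ^ (s - 1)) t := by
      intro t _
      have h1 : HasDerivAt (fun t : ℝ => 1 + c * t) c t := by
        simpa using ((hasDerivAt_id t).const_mul c).const_add 1
      have h2 := (h1.rpow_const (Or.inr (by linarith : (1:ℝ) ≤ s))).div_const k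
      refine h2.congr_deriv ?_
      rw [hcs]
      field_simp
    have hcont : ContinuousOn (fun t : ℝ => (1 + c * t) ^ (s - 1)) (Set.uIcc 0 T) :=
      (continuous_const.add (continuous_const.mul continuous_id)).continuousOn.rpow_const
        (fun x _ => Or.inr (by linarith))
    rw [intervalIntegral.integral_eq_sub_of_hasDerivAt hderiv hcont.intervalIntegrable]
    have hb0 : 1 + c * T = 0 := by linarith
    rw [hb0, Real.zero_rpow (by positivity : s ≠ 0), hM_def]
    norm_num [Real.one_rpow]
    ring
  -- the integral of r(t)^2
  have hY : (∫ t in (0:ℝ)..T, (Real.exp (k * t / 2))^2) = M * (1 - Real.exp (-s)) := by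
    have hEq : (fun t : ℝ => (Real.exp (k * t / 2))^2) = fun t : ℝ => Real.exp (k * t) := by
      funext t
      rw [sq, ← Real.exp_add]
      ring_nf
    rw [hEq]
    have hderiv : ∀ t ∈ Set.uIcc (0:ℝ) T,
        HasDerivAt (fun t : ℝ => Real.exp (k * t) / k) (Real.exp (k * t)) t := by
      intro t _
      have h1 : HasDerivAt (fun t : ℝ => k * t) k t := by
        simpa using (hasDerivAt_id t).const_mul k
      have h2 := (h1.exp).div_const k
      refine h2.congr_deriv ?_
      field_simp
    have hcont : Continuous (fun t : ℝ => Real.exp (k * t)) :=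
      Real.continuous_exp.comp (continuous_const.mul continuous_id)
    rw [intervalIntegral.integral_eq_sub_of_hasDerivAt hderiv
      hcont.continuousOn.intervalIntegrable]
    rw [hkT]
    simp only [mul_zero, Real.exp_zero]
    rw [hM_def]
    field_simp
    ring
  -- integrability and nonnegativity
  have hconta : ContinuousOn (fun t : ℝ => (1 + c * t) ^ ((1:ℝ)/(2-p))) (Set.uIcc 0 T) :=
    (continuous_const.add (continuous_const.mul continuous_id)).continuousOn.rpow_const
      (fun x _ => Or.inr (by positivity))
  have hcontr : Continuous (fun t : ℝ => Real.exp (k * t / 2)) :=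
    Real.continuous_exp.comp ((continuous_const.mul continuous_id).div_const 2)
  have hIa : IntervalIntegrable (fun t : ℝ => ((1 + c * t) ^ ((1:ℝ)/(2-p)))^2)
      MeasureTheory.volume 0 T := (hconta.pow 2).intervalIntegrable
  have hIr : IntervalIntegrable (fun t : ℝ => (Real.exp (k * t / 2))^2)
      MeasureTheory.volume 0 T :=
    ((hcontr.pow 2).continuousOn).intervalIntegrable
  have hIar : IntervalIntegrable
      (fun t : ℝ => (1 + c * t) ^ ((1:ℝ)/(2-p)) * Real.exp (k * t / 2))
      MeasureTheory.volume 0 T := (hconta.mul hcontr.continuousOn).intervalIntegrable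
  set Y : ℝ := M * (1 - Real.exp (-s)) with hY_def
  have hexps : Real.exp (-s) < 1 := Real.exp_lt_one_iff.mpr (by linarith)
  have hYpos : 0 < Y := by
    rw [hY_def]
    have : 0 < 1 - Real.exp (-s) := by linarith
    positivity
  set Z : ℝ := ∫ t in (0:ℝ)..T, (1 + c * t) ^ ((1:ℝ)/(2-p)) * Real.exp (k * t / 2)
    with hZ_def
  set α : ℝ := Real.sqrt Y with hα_def
  set β : ℝ := Real.sqrt M with hβ_def
  have hα : 0 < α := Real.sqrt_pos.mpr hYpos
  have hβ : 0 < β := Real.sqrt_pos.mpr hM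
  have hα2 : α ^ 2 = Y := Real.sq_sqrt hYpos.le
  have hβ2 : β ^ 2 = M := Real.sq_sqrt hM.le
  -- Cauchy–Schwarz via nonnegativity of a square
  have hCS : Z ≤ β * α := by
    have hnn : 0 ≤ ∫ t in (0:ℝ)..T,
        (α * (1 + c * t) ^ ((1:ℝ)/(2-p)) - β * Real.exp (k * t / 2))^2 :=
      intervalIntegral.integral_nonneg hTpos.le (fun t _ => sq_nonneg _)
    have hexp2 : (∫ t in (0:ℝ)..T,
        (α * (1 + c * t) ^ ((1:ℝ)/(2-p)) - β * Real.exp (k * t / 2))^2)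
        = α^2 * M - 2*(α*β)*Z + β^2 * Y := by
      have hfe : (fun t : ℝ =>
          (α * (1 + c * t) ^ ((1:ℝ)/(2-p)) - β * Real.exp (k * t / 2))^2)
          = fun t : ℝ => α^2 * ((1 + c * t) ^ ((1:ℝ)/(2-p)))^2
            - 2*(α*β)*((1 + c * t) ^ ((1:ℝ)/(2-p)) * Real.exp (k * t / 2))
            + β^2 * (Real.exp (k * t / 2))^2 := by
        funext t; ring
      rw [hfe, intervalIntegral.integral_add (((hIa.const_mul _).sub
          (hIar.const_mul _))) (hIr.const_mul _),
        intervalIntegral.integral_sub (hIa.const_mul _) (hIar.const_mul _),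
        intervalIntegral.integral_const_mul, intervalIntegral.integral_const_mul,
        intervalIntegral.integral_const_mul, hX, hY, ← hZ_def]
    rw [hexp2, hα2, hβ2] at hnn
    have hαβ : 0 < α * β := mul_pos hα hβ
    have hYM : Y * M = (α*β)^2 := by rw [← hα2, ← hβ2]; ring
    nlinarith
  -- expansion of the error integral
  have hmain : (∫ t in (0:ℝ)..T,
      ((1 + c * t) ^ ((1:ℝ)/(2-p)) - Real.exp (k * t / 2))^2)
      = M - 2*Z + Y := by
    have hfe : (fun t : ℝ =>
        ((1 + c * t) ^ ((1:ℝ)/(2-p)) - Real.exp (k * t / 2))^2)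
        = fun t : ℝ => ((1 + c * t) ^ ((1:ℝ)/(2-p)))^2
          - 2*((1 + c * t) ^ ((1:ℝ)/(2-p)) * Real.exp (k * t / 2))
          + (Real.exp (k * t / 2))^2 := by
      funext t; ring
    rw [hfe, intervalIntegral.integral_add ((hIa.sub (hIar.const_mul _))) hIr,
      intervalIntegral.integral_sub hIa (hIar.const_mul _),
      intervalIntegral.integral_const_mul, hX, hY, ← hZ_def]
  -- identify B
  have hw1 : (0:ℝ) ≤ 1 - Real.exp (-s) := by linarith
  have hw : Real.sqrt (1 - Real.exp (-s)) < 1 := by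
    have h' : 1 - Real.exp (-s) < 1 := by linarith [Real.exp_pos (-s)]
    have := Real.sqrt_lt_sqrt hw1 h'
    simpa using this
  have hns : -(4 - p) / (2 - p) = -s := by rw [hs_def]; ring
  have hBM : B = M * (1 - Real.sqrt (1 - Real.exp (-s)))^2 := by
    rw [hB, hns]
  have hαβsqrt : α = β * Real.sqrt (1 - Real.exp (-s)) := by
    rw [hα_def, hβ_def, hY_def, Real.sqrt_mul hM.le]
  have hBpos : 0 < B := by
    rw [hBM]
    have h1w : 0 < 1 - Real.sqrt (1 - Real.exp (-s)) := by linarith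
    positivity
  refine ⟨?_, hBpos⟩
  rw [hmain, hBM]
  have hexpand : M * (1 - Real.sqrt (1 - Real.exp (-s)))^2 = M - 2*(β*α) + Y := by
    rw [hαβsqrt, ← hβ2]
    have hY' : Y = (β * Real.sqrt (1 - Real.exp (-s)))^2 := by
      rw [mul_pow, hβ2, hY_def, Real.sq_sqrt hw1]
    rw [hY']
    ring
  rw [hexpand]
  linarith
end

section
/- Fix p ∈ [1,2) and λ < 0, set T = −1/(λ(2−p)), and let a(t) = (1 + λ(2−p)t)^{1/(2−p)} for t ∈ [0,T]. Let δ ∈ (0,2) with δ ≠ 1 and define the sampling times t_k = (|1−δ|^{k(2−p)} − 1)/(λ(2−p)) for integers k ≥ 0. Then for every k ≥ 0: (i) 0 ≤ t_k < T and t_k < t_{k+1}; (ii) a(t_k) = |1−δ|^k. Consequently the sampled values are geometric: a(t_{k+1}) = |1−δ| · a(t_k) for all k ≥ 0, so a single linear recurrence with factor μ = |1−δ| reproduces all samples exactly (zero DMD reconstruction error). -/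
/-- Adaptive sampling of the decay profile: sampling
`a(t) = (1+λ(2−p)t)^{1/(2−p)}` at the times
`t_k = (|1−δ|^{k(2−p)} − 1)/(λ(2−p))` gives `0 ≤ t_k < T`, `t_k < t_{k+1}`,
`a(t_k) = |1−δ|^k`, and hence the geometric recurrence
`a(t_{k+1}) = |1−δ|·a(t_k)`, so the samples are reproduced exactly by a
single linear recurrence with factor `μ = |1−δ|`. -/
theorem stmt5 (p lam T : ℝ) (hp1 : 1 ≤ p) (hp2 : p < 2) (hlam : lam < 0)
    (hT : T = -1 / (lam * (2 - p)))
    (a : ℝ → ℝ) (ha : ∀ t : ℝ, a t = (1 + lam * (2 - p) * t) ^ ((1 : ℝ) / (2 - p)))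
    (δ : ℝ) (hδ : δ ∈ Set.Ioo (0 : ℝ) 2) (hδ1 : δ ≠ 1)
    (t : ℕ → ℝ)
    (ht : ∀ k : ℕ, t k = (|1 - δ| ^ ((k : ℝ) * (2 - p)) - 1) / (lam * (2 - p))) :
    ∀ k : ℕ,
      (0 ≤ t k ∧ t k < T) ∧
      t k < t (k + 1) ∧
      a (t k) = |1 - δ| ^ k ∧
      a (t (k + 1)) = |1 - δ| * a (t k) := by
  obtain ⟨hδ0, hδ2⟩ := hδ
  set μ := |1 - δ| with hμ
  have hμ0 : 0 < μ := abs_pos.mpr (sub_ne_zero.mpr (Ne.symm hδ1))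
  have hμ1 : μ < 1 := abs_lt.mpr ⟨by linarith, by linarith⟩
  have h2p : (0:ℝ) < 2 - p := by linarith
  have hc : lam * (2 - p) < 0 := mul_neg_of_neg_of_pos hlam h2p
  have hc' : lam * (2 - p) ≠ 0 := ne_of_lt hc
  have key : ∀ m : ℕ, 1 + lam * (2 - p) * t m = μ ^ ((m : ℝ) * (2 - p)) := by
    intro m
    rw [ht m]
    field_simp
    rw [mul_div_cancel_left₀ _ (ne_of_lt hlam)]
    ring
  have hpow_pos : ∀ m : ℕ, (0:ℝ) < μ ^ ((m : ℝ) * (2 - p)) := fun m =>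
    Real.rpow_pos_of_pos hμ0 _
  have hpow_le : ∀ m : ℕ, μ ^ ((m : ℝ) * (2 - p)) ≤ 1 := fun m =>
    Real.rpow_le_one (le_of_lt hμ0) (le_of_lt hμ1) (by positivity)
  have ha' : ∀ m : ℕ, a (t m) = μ ^ m := by
    intro m
    rw [ha, key m, ← Real.rpow_natCast μ m, ← Real.rpow_mul (le_of_lt hμ0)]
    congr 1
    field_simp
  intro k
  have hk0 := hpow_pos k
  have hk1 := hpow_le k
  have hk0' := hpow_pos (k + 1)
  have hmono : μ ^ (((k:ℕ)+1 : ℝ) * (2 - p)) < μ ^ ((k : ℝ) * (2 - p)) :=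
    Real.rpow_lt_rpow_of_exponent_gt hμ0 hμ1 (by nlinarith)
  refine ⟨⟨?_, ?_⟩, ?_, ha' k, ?_⟩
  · rw [ht]
    apply div_nonneg_of_nonpos (by linarith) (le_of_lt hc)
  · rw [ht, hT, div_lt_div_right_of_neg hc]
    linarith
  · rw [ht, ht, div_lt_div_right_of_neg hc]
    push_cast
    push_cast at hmono
    linarith
  · rw [ha' k, ha' (k+1), pow_succ]
    ring
end

section
/- Fix p ∈ [1,2), M ≥ 1, and let P : ℝ^M → ℝ^M satisfy P(aψ) = a·|a|^{p−2}·P(ψ) for every real a ≠ 0 and ψ ∈ ℝ^M. Let f ∈ ℝ^M be nonzero with P(f) = λf for some λ < 0, and let δ ∈ (0,1). Define the explicit scheme ψ_0 = f, ψ_{k+1} = ψ_k + dt_k · P(ψ_k), with the adaptive step size dt_k = −(⟨P(ψ_k), ψ_k⟩ / ‖P(ψ_k)‖²) · δ. Then P(ψ_k) ≠ 0 for every k and ψ_k = (1−δ)^k · f for all k ≥ 0; in particular ψ_{k+1} = (1−δ)·ψ_k for all k, so the rank-one linear map A = (1−δ)·f fᵀ/‖f‖² reproduces the scheme exactly and the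 DMD reconstruction error is zero. -/
/-- Zero reconstruction error for the adaptive-step explicit scheme:
for a `(p−1)`-homogeneous operator `P` and an eigenfunction initial
condition `P f = λ f` (`λ < 0`, `f ≠ 0`), the explicit scheme
`ψ_{k+1} = ψ_k + dt_k P(ψ_k)` with adaptive step size
`dt_k = −(⟨P(ψ_k),ψ_k⟩/‖P(ψ_k)‖²)·δ`, `δ ∈ (0,1)`, satisfies
`P(ψ_k) ≠ 0`, `ψ_k = (1−δ)^k f`, and `ψ_{k+1} = (1−δ) ψ_k`, so the
rank-one linear map `(1−δ)·f fᵀ/‖f‖²` reproduces the scheme exactly. -/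
theorem stmt6 (p : ℝ) (hp1 : 1 ≤ p) (hp2 : p < 2) (M : ℕ) (hM : 1 ≤ M)
    (P : EuclideanSpace ℝ (Fin M) → EuclideanSpace ℝ (Fin M))
    (hP : ∀ c : ℝ, c ≠ 0 → ∀ ψ : EuclideanSpace ℝ (Fin M),
      P (c • ψ) = (c * |c| ^ (p - 2)) • P ψ)
    (f : EuclideanSpace ℝ (Fin M)) (hf : f ≠ 0)
    (lam : ℝ) (hlam : lam < 0) (hef : P f = lam • f)
    (δ : ℝ) (hδ : δ ∈ Set.Ioo (0 : ℝ) 1)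
    (ψ : ℕ → EuclideanSpace ℝ (Fin M)) (hψ0 : ψ 0 = f)
    (hψ : ∀ k : ℕ, ψ (k + 1) = ψ k +
      (-((inner ℝ (P (ψ k)) (ψ k) : ℝ) / ‖P (ψ k)‖ ^ 2) * δ) • P (ψ k)) :
    ∀ k : ℕ,
      P (ψ k) ≠ 0 ∧
      ψ k = ((1 - δ) ^ k) • f ∧
      ψ (k + 1) = (1 - δ) • ψ k ∧
      ((1 - δ) / ‖f‖ ^ 2) • ((inner ℝ f (ψ k) : ℝ) • f) = ψ (k + 1) := by
  obtain ⟨hδ0, hδ1⟩ := hδ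
  have hlam' : lam ≠ 0 := ne_of_lt hlam
  have hfn : ‖f‖ ≠ 0 := norm_ne_zero_iff.mpr hf
  have hPc : ∀ k : ℕ, ψ k = ((1 - δ) ^ k) • f →
      P (ψ k) = (((1 - δ) ^ k) * |(1 - δ) ^ k| ^ (p - 2) * lam) • f := by
    intro k hk
    have hcpos : (0 : ℝ) < (1 - δ) ^ k := pow_pos (by linarith) k
    rw [hk, hP _ (ne_of_gt hcpos), hef, smul_smul]
  have hμ : ∀ k : ℕ, ((1 - δ) ^ k) * |(1 - δ) ^ k| ^ (p - 2) * lam < 0 := by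
    intro k
    have hcpos : (0 : ℝ) < (1 - δ) ^ k := pow_pos (by linarith) k
    have : (0 : ℝ) < ((1 - δ) ^ k) * |(1 - δ) ^ k| ^ (p - 2) :=
      mul_pos hcpos (Real.rpow_pos_of_pos (abs_pos.mpr (ne_of_gt hcpos)) _)
    exact mul_neg_of_pos_of_neg this hlam
  have key : ∀ k : ℕ, ψ k = ((1 - δ) ^ k) • f := by
    intro k
    induction k with
    | zero => simpa using hψ0
    | succ k ih =>
      set c : ℝ := (1 - δ) ^ k with hc
      set μ : ℝ := c * |c| ^ (p - 2) * lam with hm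
      have hμne : μ ≠ 0 := ne_of_lt (hμ k)
      have hin : (inner ℝ (P (ψ k)) (ψ k) : ℝ) = μ * c * ‖f‖ ^ 2 := by
        rw [hPc k ih, ih, real_inner_smul_left, real_inner_smul_right,
          real_inner_self_eq_norm_sq]
        ring
      have hn : ‖P (ψ k)‖ ^ 2 = μ ^ 2 * ‖f‖ ^ 2 := by
        rw [hPc k ih, norm_smul, mul_pow, Real.norm_eq_abs, sq_abs]
      rw [hψ k, hin, hn, hPc k ih, ih, smul_smul, ← add_smul]
      congr 1
      rw [pow_succ, ← hc, ← hm]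
      clear_value c μ
      field_simp
      rw [hc]
      ring
  intro k
  have hcpos : (0 : ℝ) < (1 - δ) ^ k := pow_pos (by linarith) k
  refine ⟨?_, key k, ?_, ?_⟩
  · rw [hPc k (key k)]
    exact smul_ne_zero (ne_of_lt (hμ k)) hf
  · rw [key (k + 1), key k, smul_smul, pow_succ']
  · rw [key (k + 1), key k, real_inner_smul_right, real_inner_self_eq_norm_sq,
      smul_smul]
    congr 1
    rw [pow_succ]
    field_simp
    ring
end

section
/- Let R : ℝ^M → ℝ be convex and differentiable with R ≥ 0 and R(0) = 0, and write ∇R for its gradient. Let ψ : [0,∞) → ℝ^M be differentiable with ∇R(ψ(t)) ≠ 0 for all t ≥ 0 and satisfying the time-rescaled gradient flow ψ'(t) = −(⟨∇R(ψ(t)), ψ(t)⟩ / ‖∇R(ψ(t))‖²) · ∇R(ψ(t)). Then R(ψ(t)) ≤ R(ψ(0)) · e^{−t} for all t ≥ 0. -/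
/-- Exponential decay of a convex functional along the time-rescaled
gradient flow: if `R : ℝ^M → ℝ` is convex, differentiable with gradient
`g = ∇R`, nonnegative with `R(0) = 0`, and `ψ` solves
`ψ' = −(⟨∇R(ψ),ψ⟩/‖∇R(ψ)‖²)·∇R(ψ)` with `∇R(ψ(t)) ≠ 0` on `[0,∞)`,
then `R(ψ(t)) ≤ R(ψ(0)) e^{−t}` for all `t ≥ 0`. -/
theorem stmt7 (M : ℕ) (hM : 1 ≤ M)
    (R : EuclideanSpace ℝ (Fin M) → ℝ)
    (hconv : ConvexOn ℝ Set.univ R)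
    (hR0 : R 0 = 0)
    (hRnonneg : ∀ x : EuclideanSpace ℝ (Fin M), 0 ≤ R x)
    (g : EuclideanSpace ℝ (Fin M) → EuclideanSpace ℝ (Fin M))
    (hg : ∀ x : EuclideanSpace ℝ (Fin M), HasGradientAt R (g x) x)
    (ψ : ℝ → EuclideanSpace ℝ (Fin M))
    (hgne : ∀ t : ℝ, 0 ≤ t → g (ψ t) ≠ 0)
    (hψ : ∀ t : ℝ, 0 ≤ t → HasDerivAt ψ
      (-((inner ℝ (g (ψ t)) (ψ t) : ℝ) / ‖g (ψ t)‖ ^ 2) • g (ψ t)) t) :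
    ∀ t : ℝ, 0 ≤ t → R (ψ t) ≤ R (ψ 0) * Real.exp (-t) := by
  -- gradient inequality: R x ≤ ⟪g x, x⟫
  have key : ∀ x : EuclideanSpace ℝ (Fin M), R x ≤ (inner ℝ (g x) x : ℝ) := by
    intro x
    set φ : ℝ → ℝ := fun s => R (s • x) with hφ
    have hφconv : ConvexOn ℝ Set.univ φ := by
      have := hconv.comp_affineMap
        ((LinearMap.id.smulRight x : ℝ →ₗ[ℝ] EuclideanSpace ℝ (Fin M)).toAffineMap)
      simp [Set.preimage_univ] at this
      exact this
    have hderiv : HasDerivAt φ (inner ℝ (g x) x : ℝ) 1 := by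
      have h1 : HasDerivAt (fun s : ℝ => s • x) x 1 := by
        simpa using (hasDerivAt_id (1:ℝ)).smul_const x
      have h2 : HasFDerivAt R (InnerProductSpace.toDual ℝ _ (g x)) ((1:ℝ) • x) := by
        rw [one_smul]; exact (hg x).hasFDerivAt
      have := h2.comp_hasDerivAt (1:ℝ) h1
      simp [InnerProductSpace.toDual_apply_apply] at this
      exact this
    have := hφconv.slope_le_of_hasDerivAt (Set.mem_univ 0) (Set.mem_univ 1)
      zero_lt_one hderiv
    simpa [slope, φ, hR0] using this
  intro t ht
  set f : ℝ → ℝ := fun s => R (ψ s) with hf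
  have hf' : ∀ s : ℝ, 0 ≤ s → HasDerivAt f (-(inner ℝ (g (ψ s)) (ψ s) : ℝ)) s := by
    intro s hs
    have h2 : HasFDerivAt R (InnerProductSpace.toDual ℝ _ (g (ψ s))) (ψ s) :=
      (hg (ψ s)).hasFDerivAt
    have hder := h2.comp_hasDerivAt s (hψ s hs)
    have hne : ‖g (ψ s)‖ ≠ 0 := norm_ne_zero_iff.mpr (hgne s hs)
    have hval : (InnerProductSpace.toDual ℝ _ (g (ψ s)))
        ((-((inner ℝ (g (ψ s)) (ψ s) : ℝ) / ‖g (ψ s)‖ ^ 2)) • g (ψ s))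
        = -(inner ℝ (g (ψ s)) (ψ s) : ℝ) := by
      rw [InnerProductSpace.toDual_apply_apply, real_inner_smul_right,
        real_inner_self_eq_norm_sq]
      field_simp
    rw [hval] at hder
    exact hder
  set h : ℝ → ℝ := fun s => f s * Real.exp s with hh
  have hh' : ∀ s : ℝ, 0 ≤ s →
      HasDerivAt h ((-(inner ℝ (g (ψ s)) (ψ s) : ℝ) + f s) * Real.exp s) s := by
    intro s hs
    have hd := (hf' s hs).mul (Real.hasDerivAt_exp s)
    rw [add_mul]
    exact hd
  have hanti : AntitoneOn h (Set.Ici 0) := by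
    refine antitoneOn_of_deriv_nonpos (convex_Ici 0)
      (fun s hs => ((hh' s hs).continuousAt).continuousWithinAt)
      (fun s hs => ?_) (fun s hs => ?_)
    · rw [interior_Ici] at hs
      exact ((hh' s hs.le).differentiableAt).differentiableWithinAt
    · rw [interior_Ici] at hs
      rw [(hh' s hs.le).deriv]
      apply mul_nonpos_of_nonpos_of_nonneg _ (Real.exp_pos s).le
      have := key (ψ s)
      simp only [f]
      linarith
  have hht : h t ≤ h 0 := hanti (Set.self_mem_Ici) ht ht
  have h0 : h 0 = R (ψ 0) := by simp [h, f]
  have : R (ψ t) * Real.exp t ≤ R (ψ 0) := by rw [← h0]; exact hht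
  calc R (ψ t) = R (ψ t) * Real.exp t * Real.exp (-t) := by
        rw [mul_assoc, ← Real.exp_add]; simp
    _ ≤ R (ψ 0) * Real.exp (-t) := by
        exact mul_le_mul_of_nonneg_right this (Real.exp_pos _).le
end

section
/- Let X, Y be real r×N matrices and let F be a symmetric real r×r matrix that minimizes the squared Frobenius norm ‖Y − F'X‖_F² over all symmetric real r×r matrices F'. Then F satisfies the Sylvester equation F·(XXᵀ) + (XXᵀ)·F = XYᵀ + YXᵀ. -/
open Matrix

/-- Symmetric DMD: a symmetric matrix `F` minimizing the squared Frobenius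
norm `‖Y − F'X‖_F²` over all symmetric matrices `F'` satisfies the
Sylvester equation `F(XXᵀ) + (XXᵀ)F = XYᵀ + YXᵀ`. -/
theorem stmt13 (r N : ℕ) (X Y : Matrix (Fin r) (Fin N) ℝ)
    (F : Matrix (Fin r) (Fin r) ℝ) (hF : F.IsSymm)
    (hmin : ∀ F' : Matrix (Fin r) (Fin r) ℝ, F'.IsSymm →
      ∑ i : Fin r, ∑ j : Fin N, (Y i j - (F * X) i j) ^ 2 ≤
      ∑ i : Fin r, ∑ j : Fin N, (Y i j - (F' * X) i j) ^ 2) :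
    F * (X * Xᵀ) + (X * Xᵀ) * F = X * Yᵀ + Y * Xᵀ := by
  -- first-order condition
  have key : ∀ H : Matrix (Fin r) (Fin r) ℝ, H.IsSymm →
      (∑ i : Fin r, ∑ j : Fin N, (Y i j - (F * X) i j) * ((H * X) i j)) = 0 := by
    intro H hH
    set b := ∑ i : Fin r, ∑ j : Fin N, (Y i j - (F * X) i j) * ((H * X) i j) with hbdef
    set a := ∑ i : Fin r, ∑ j : Fin N, ((H * X) i j) ^ 2 with hadef
    have ha : 0 ≤ a := Finset.sum_nonneg fun i _ => Finset.sum_nonneg fun j _ => sq_nonneg _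
    have hq : ∀ t : ℝ, 2 * t * b ≤ t ^ 2 * a := by
      intro t
      have hsymm : (F + t • H).IsSymm := by
        simp [Matrix.IsSymm, transpose_add, transpose_smul, hF.eq, hH.eq]
      have h := hmin (F + t • H) hsymm
      have expand : ∀ i j, (Y i j - ((F + t • H) * X) i j) ^ 2 =
          (Y i j - (F * X) i j) ^ 2
          - 2 * t * ((Y i j - (F * X) i j) * ((H * X) i j))
          + t ^ 2 * ((H * X) i j) ^ 2 := by
        intro i j
        have : ((F + t • H) * X) i j = (F * X) i j + t * (H * X) i j := by
          simp [Matrix.add_mul, Matrix.smul_mul]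
        rw [this]; ring
      have hsum : (∑ i : Fin r, ∑ j : Fin N, (Y i j - ((F + t • H) * X) i j) ^ 2)
          = (∑ i : Fin r, ∑ j : Fin N, (Y i j - (F * X) i j) ^ 2)
            - 2 * t * b + t ^ 2 * a := by
        simp only [expand, Finset.sum_add_distrib, Finset.sum_sub_distrib,
          ← Finset.mul_sum, hbdef, hadef]
      rw [hsum] at h
      linarith
    -- quadratic argument: b = 0
    have h1 : 0 < a + 1 := by linarith
    have h := hq (b / (a + 1))
    have hb2 : b ^ 2 ≤ 0 := by
      rw [div_pow] at h
      have h2 : 2 * (b / (a + 1)) * b * (a + 1) ^ 2 ≤ b ^ 2 / (a + 1) ^ 2 * a * (a + 1) ^ 2 := by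
        nlinarith [sq_nonneg (a + 1)]
      have e1 : 2 * (b / (a + 1)) * b * (a + 1) ^ 2 = 2 * b ^ 2 * (a + 1) := by
        field_simp
      have e2 : b ^ 2 / (a + 1) ^ 2 * a * (a + 1) ^ 2 = b ^ 2 * a := by
        field_simp
      rw [e1, e2] at h2
      nlinarith
    nlinarith [sq_nonneg b]
  -- apply to the symmetric part of M := (Y - F*X) * Xᵀ
  set M : Matrix (Fin r) (Fin r) ℝ := (Y - F * X) * Xᵀ with hMdef
  set S : Matrix (Fin r) (Fin r) ℝ := M + Mᵀ with hSdef
  have hSsymm : S.IsSymm := by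
    simp [Matrix.IsSymm, hSdef, transpose_add, add_comm]
  have hkey := key S hSsymm
  -- rewrite the sum as ∑ i k, S i k * M i k
  have hM : ∀ i k, M i k = ∑ j : Fin N, (Y i j - (F * X) i j) * X k j := by
    intro i k
    simp [hMdef, Matrix.mul_apply, Matrix.sub_apply, Matrix.transpose_apply]
  have hrw : (∑ i : Fin r, ∑ j : Fin N, (Y i j - (F * X) i j) * ((S * X) i j))
      = ∑ i : Fin r, ∑ k : Fin r, S i k * M i k := by
    have : ∀ i : Fin r, (∑ j : Fin N, (Y i j - (F * X) i j) * ((S * X) i j))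
        = ∑ k : Fin r, S i k * M i k := by
      intro i
      simp only [Matrix.mul_apply, Finset.mul_sum, hM]
      rw [Finset.sum_comm]
      congr 1; ext k
      congr 1; ext j
      ring
    simp only [this]
  rw [hrw] at hkey
  -- ∑ S² = 2 ∑ S M
  have hswap : (∑ i : Fin r, ∑ k : Fin r, S i k * M k i)
      = ∑ i : Fin r, ∑ k : Fin r, S i k * M i k := by
    rw [Finset.sum_comm]
    congr 1; ext i
    congr 1; ext k
    have : S k i = S i k := by
      have := hSsymm.eq
      calc S k i = Sᵀ i k := rfl
        _ = S i k := by rw [this]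
    rw [this]
  have hsq : (∑ i : Fin r, ∑ k : Fin r, (S i k) ^ 2) = 0 := by
    have : ∀ i k, (S i k) ^ 2 = S i k * M i k + S i k * M k i := by
      intro i k
      have : S i k = M i k + M k i := by
        simp [hSdef, Matrix.add_apply, Matrix.transpose_apply]
      rw [this]; ring
    simp only [this, Finset.sum_add_distrib, hswap, hkey]
    ring
  have hSzero : ∀ i k, S i k = 0 := by
    intro i k
    have h1 : ∀ i ∈ Finset.univ, (0:ℝ) ≤ ∑ k : Fin r, (S i k) ^ 2 :=
      fun i _ => Finset.sum_nonneg fun k _ => sq_nonneg _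
    have h2 := (Finset.sum_eq_zero_iff_of_nonneg h1).mp hsq i (Finset.mem_univ i)
    have h3 := (Finset.sum_eq_zero_iff_of_nonneg
      (fun k _ => sq_nonneg (S i k))).mp h2 k (Finset.mem_univ k)
    exact pow_eq_zero_iff (n := 2) (by norm_num) |>.mp h3
  have hS0 : M + Mᵀ = 0 := by
    ext i k
    exact hSzero i k
  -- final algebra
  have h1 : M = Y * Xᵀ - F * (X * Xᵀ) := by
    rw [hMdef, Matrix.sub_mul, Matrix.mul_assoc]
  have h2 : Mᵀ = X * Yᵀ - (X * Xᵀ) * F := by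
    rw [hMdef, transpose_mul, transpose_sub, transpose_mul, transpose_transpose, hF.eq]
    rw [Matrix.mul_sub, ← Matrix.mul_assoc]
  rw [h2, h1] at hS0
  have : F * (X * Xᵀ) + (X * Xᵀ) * F - (X * Yᵀ + Y * Xᵀ)
      = -((Y * Xᵀ - F * (X * Xᵀ)) + (X * Yᵀ - (X * Xᵀ) * F)) := by abel
  rw [hS0, neg_zero] at this
  exact sub_eq_zero.mp this
end

section
/- Fix p ∈ [1,2) and λ < 0, set T = −1/(λ(2−p)), and let a(t) = (1 + λ(2−p)t)^{1/(2−p)} for t ∈ [0,T]. For each integer N ≥ 2 define μ_N = (Σ_{k=1}^{N} a(kT/N) · a((k−1)T/N)) / (Σ_{k=1}^{N} a((k−1)T/N)²). Then lim_{N→∞} μ_N = 1. -/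
open Filter

private lemma stmt16_reflect (N : ℕ) (f : ℝ → ℝ) :
    ∑ k ∈ Finset.Icc 1 N, f ((N : ℝ) - (k : ℝ)) = ∑ j ∈ Finset.range N, f (j : ℝ) := by
  rw [← Finset.Ico_add_one_right_eq_Icc, Finset.sum_Ico_eq_sum_range,
    ← Finset.sum_range_reflect (fun i => f (i : ℝ))]
  refine Finset.sum_congr (by norm_num) fun i hi => ?_
  rw [Finset.mem_range] at hi
  congr 1
  rw [Nat.cast_sub (by omega : i ≤ N - 1), Nat.cast_sub (by omega : 1 ≤ N)]
  push_cast
  ring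

private lemma stmt16_gauss (N : ℕ) :
    ∑ j ∈ Finset.range N, ((j : ℝ) + 1) = N * (N + 1) / 2 := by
  induction N with
  | zero => simp
  | succ n ih => rw [Finset.sum_range_succ, ih]; push_cast; ring

/-- The discrete DMD eigenvalue `μ_N` obtained from `N` uniform samples on
`[0,T]` of the decay profile `a(t) = (1+λ(2−p)t)^{1/(2−p)}`,
`T = −1/(λ(2−p))`, converges to `1` as `N → ∞` (step size `dt → 0`). -/
theorem stmt16 (p lam T : ℝ) (hp1 : 1 ≤ p) (hp2 : p < 2) (hlam : lam < 0)
    (hT : T = -1 / (lam * (2 - p)))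
    (a : ℝ → ℝ) (ha : ∀ t : ℝ, a t = (1 + lam * (2 - p) * t) ^ ((1 : ℝ) / (2 - p)))
    (μ : ℕ → ℝ)
    (hμ : ∀ N : ℕ, μ N =
      (∑ k ∈ Finset.Icc 1 N, a ((k : ℝ) * T / N) * a (((k : ℝ) - 1) * T / N)) /
      (∑ k ∈ Finset.Icc 1 N, (a (((k : ℝ) - 1) * T / N)) ^ 2)) :
    Tendsto (fun N : ℕ => μ N) atTop (nhds 1) := by
  have hq : (0:ℝ) < 2 - p := by linarith
  set α : ℝ := 1 / (2 - p) with hαdef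
  have hα1 : 1 ≤ α := by
    rw [hαdef, le_div_iff₀ hq]; linarith
  have hα0 : 0 < α := by linarith
  set β : ℝ := 2 * α with hβdef
  have hβ1 : 1 ≤ β := by simp only [hβdef]; linarith
  have hβ0 : 0 < β := by linarith
  have hc : lam * (2 - p) < 0 := mul_neg_of_neg_of_pos hlam hq
  have hc0 : lam * (2 - p) ≠ 0 := ne_of_lt hc
  -- sample values of `a`
  have key1 : ∀ N : ℕ, 0 < N → ∀ k : ℕ, (k:ℝ) ≤ N →
      a ((k : ℝ) * T / N) = (((N : ℝ) - k) / N) ^ α := by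
    intro N hN k _
    rw [ha, hT]
    congr 1
    have hNR : (N:ℝ) ≠ 0 := Nat.cast_ne_zero.mpr hN.ne'
    field_simp
    linear_combination (-(k:ℝ)) * mul_inv_cancel₀ hlam.ne
  have key2 : ∀ N : ℕ, 0 < N → ∀ k : ℕ, (k:ℝ) ≤ N →
      a (((k : ℝ) - 1) * T / N) = (((N : ℝ) - k + 1) / N) ^ α := by
    intro N hN k _
    rw [ha, hT]
    congr 1
    have hNR : (N:ℝ) ≠ 0 := Nat.cast_ne_zero.mpr hN.ne'
    field_simp
    linear_combination (1 - (k:ℝ)) * mul_inv_cancel₀ hlam.ne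
  -- key sums
  set P : ℕ → ℝ := fun N => ∑ k ∈ Finset.Icc 1 N,
      (((N : ℝ) - k) ^ α * ((N : ℝ) - k + 1) ^ α) with hP
  set Q : ℕ → ℝ := fun N => ∑ k ∈ Finset.Icc 1 N, ((N : ℝ) - k + 1) ^ β with hQ
  -- facts valid for N ≥ 1
  have main : ∀ N : ℕ, 1 ≤ N → |μ N - 1| ≤ 2 ^ β / N := by
    intro N hN
    have hN0 : 0 < N := hN
    have hNR : (0:ℝ) < N := by exact_mod_cast hN0
    have hki : ∀ k ∈ Finset.Icc 1 N, (k:ℝ) ≤ N ∧ (0:ℝ) ≤ (N:ℝ) - k := by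
      intro k hk
      rw [Finset.mem_Icc] at hk
      have : (k:ℝ) ≤ N := by exact_mod_cast hk.2
      exact ⟨this, by linarith⟩
    -- μ N = P N / Q N
    have hμN : μ N = P N / Q N := by
      rw [hμ]
      have hnum : (∑ k ∈ Finset.Icc 1 N, a ((k : ℝ) * T / N) * a (((k : ℝ) - 1) * T / N))
          = P N / (N:ℝ) ^ β := by
        rw [hP, Finset.sum_div]
        refine Finset.sum_congr rfl fun k hk => ?_
        obtain ⟨hk1, hk2⟩ := hki k hk
        rw [key1 N hN0 k hk1, key2 N hN0 k hk1,
          Real.div_rpow hk2 hNR.le, Real.div_rpow (by linarith) hNR.le,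
          div_mul_div_comm, ← Real.rpow_add hNR]
        norm_num [hβdef]
        ring_nf
      have hden : (∑ k ∈ Finset.Icc 1 N, (a (((k : ℝ) - 1) * T / N)) ^ 2)
          = Q N / (N:ℝ) ^ β := by
        rw [hQ, Finset.sum_div]
        refine Finset.sum_congr rfl fun k hk => ?_
        obtain ⟨hk1, hk2⟩ := hki k hk
        have hb : (0:ℝ) ≤ ((N : ℝ) - k + 1) / N := by positivity
        rw [key2 N hN0 k hk1, ← Real.rpow_natCast ((((N : ℝ) - k + 1) / N) ^ α) 2,
          ← Real.rpow_mul hb, Real.div_rpow (by linarith) hNR.le]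
        norm_num [hβdef]
        ring_nf
      rw [hnum, hden, div_div_div_comm, div_self (by positivity : ((N:ℝ))^β ≠ 0), div_one]
    -- P N ≤ Q N
    have hPQ : P N ≤ Q N := by
      refine Finset.sum_le_sum fun k hk => ?_
      obtain ⟨hk1, hk2⟩ := hki k hk
      have h1 : ((N:ℝ) - k) ^ α ≤ ((N:ℝ) - k + 1) ^ α :=
        Real.rpow_le_rpow hk2 (by linarith) hα0.le
      calc ((N : ℝ) - k) ^ α * ((N : ℝ) - k + 1) ^ α
          ≤ ((N : ℝ) - k + 1) ^ α * ((N : ℝ) - k + 1) ^ α :=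
            mul_le_mul_of_nonneg_right h1 (Real.rpow_nonneg (by linarith) α)
        _ = ((N : ℝ) - k + 1) ^ β := by
            rw [← Real.rpow_add (by linarith : (0:ℝ) < (N:ℝ) - k + 1)]
            norm_num [hβdef]; ring_nf
    -- Q N - N^β ≤ P N
    have hQR : Q N - (N:ℝ) ^ β ≤ P N := by
      have hR : ∑ k ∈ Finset.Icc 1 N, ((N : ℝ) - k) ^ β = Q N - (N:ℝ) ^ β := by
        have e1 : ∑ k ∈ Finset.Icc 1 N, ((N : ℝ) - k) ^ β
            = ∑ j ∈ Finset.range N, (j:ℝ) ^ β :=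
          stmt16_reflect N (fun x => x ^ β)
        have e2 : Q N = ∑ j ∈ Finset.range N, ((j:ℝ) + 1) ^ β :=
          stmt16_reflect N (fun x => (x + 1) ^ β)
        have e3 : ∑ j ∈ Finset.range N, (((j:ℝ) + 1) ^ β - (j:ℝ) ^ β)
            = (N:ℝ) ^ β - ((0:ℕ):ℝ) ^ β := by
          have := Finset.sum_range_sub (fun j : ℕ => ((j:ℝ)) ^ β) N
          simpa using this
        rw [e1, e2]
        have h4 : (∑ j ∈ Finset.range N, ((j:ℝ) + 1) ^ β)
            - ∑ j ∈ Finset.range N, (j:ℝ) ^ β = (N:ℝ) ^ β := by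
          rw [← Finset.sum_sub_distrib, e3]
          simp [Real.zero_rpow hβ0.ne']
        linarith
      calc Q N - (N:ℝ)^β = ∑ k ∈ Finset.Icc 1 N, ((N : ℝ) - k) ^ β := hR.symm
        _ ≤ P N := by
          refine Finset.sum_le_sum fun k hk => ?_
          obtain ⟨hk1, hk2⟩ := hki k hk
          rw [show β = α + α by rw [hβdef]; ring, Real.rpow_add' hk2 (by linarith)]
          exact mul_le_mul_of_nonneg_left
            (Real.rpow_le_rpow hk2 (by linarith) hα0.le) (Real.rpow_nonneg hk2 α)
    -- power mean lower bound for Q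
    have hQlb : (N:ℝ) * ((N:ℝ)/2) ^ β ≤ Q N := by
      have hw : ∀ k ∈ Finset.Icc 1 N, (0:ℝ) ≤ 1 / N := fun k _ => by positivity
      have hw' : ∑ _k ∈ Finset.Icc 1 N, (1:ℝ) / N = 1 := by
        rw [Finset.sum_const, Nat.card_Icc]
        simp only [Nat.add_sub_cancel, nsmul_eq_mul]
        field_simp
      have hz : ∀ k ∈ Finset.Icc 1 N, (0:ℝ) ≤ (N:ℝ) - k + 1 := fun k hk => by
        have := (hki k hk).2; linarith
      have hpm := Real.rpow_arith_mean_le_arith_mean_rpow (Finset.Icc 1 N)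
        (fun _ => 1 / N) (fun k => (N:ℝ) - k + 1) hw hw' hz hβ1
      have hsum : ∑ k ∈ Finset.Icc 1 N, (1:ℝ)/N * ((N:ℝ) - k + 1) = ((N:ℝ) + 1)/2 := by
        rw [← Finset.mul_sum, stmt16_reflect N (fun x => x + 1), stmt16_gauss N]
        field_simp
      have hsum2 : ∑ k ∈ Finset.Icc 1 N, (1:ℝ)/N * ((N:ℝ) - k + 1) ^ β = Q N / N := by
        rw [← Finset.mul_sum, hQ]; ring
      rw [hsum, hsum2] at hpm
      have h1 : ((N:ℝ)/2) ^ β ≤ (((N:ℝ) + 1)/2) ^ β :=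
        Real.rpow_le_rpow (by positivity) (by linarith) hβ0.le
      have h2 := h1.trans hpm
      rw [le_div_iff₀ hNR] at h2
      linarith [h2]
    have hQpos : 0 < Q N := lt_of_lt_of_le (by positivity) hQlb
    -- assemble
    have hμle : μ N ≤ 1 := by
      rw [hμN, div_le_one hQpos]; exact hPQ
    have hμge : 1 - (N:ℝ)^β / Q N ≤ μ N := by
      rw [hμN]
      have h5 : (Q N - (N:ℝ)^β) / Q N ≤ P N / Q N := by gcongr
      rw [sub_div, div_self hQpos.ne'] at h5
      exact h5
    have h6 : (N:ℝ)^β / Q N ≤ 2^β / N := by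
      have he : (N:ℝ) * ((N:ℝ)/2) ^ β = (N:ℝ) * (N:ℝ)^β / 2^β := by
        rw [Real.div_rpow hNR.le (by norm_num)]; ring
      have h7 : (N:ℝ)^β / Q N ≤ (N:ℝ)^β / ((N:ℝ) * ((N:ℝ)/2) ^ β) :=
        div_le_div_of_nonneg_left (by positivity) (by positivity) hQlb
      refine h7.trans (le_of_eq ?_)
      rw [he]
      have hNβ : ((N:ℝ))^β ≠ 0 := by positivity
      have h2β : ((2:ℝ))^β ≠ 0 := by positivity
      field_simp
    calc |μ N - 1| = 1 - μ N := by
          rw [abs_of_nonpos (by linarith)]; ring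
      _ ≤ (N:ℝ)^β / Q N := by linarith
      _ ≤ 2^β / N := h6
  -- conclude via squeeze
  have h0 : Tendsto (fun N : ℕ => (2:ℝ)^β / N) atTop (nhds 0) :=
    tendsto_const_div_atTop_nhds_zero_nat _
  have habs : Tendsto (fun N : ℕ => |μ N - 1|) atTop (nhds 0) :=
    squeeze_zero' (Eventually.of_forall fun N => abs_nonneg _)
      (eventually_atTop.2 ⟨1, main⟩) h0
  have h8 : Tendsto (fun N : ℕ => μ N - 1) atTop (nhds 0) :=
    (tendsto_zero_iff_abs_tendsto_zero _).mpr habs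
  exact tendsto_sub_nhds_zero_iff.mp h8
end

section
/- Fix p ∈ [1,2) and λ < 0, set T = −1/(λ(2−p)), and let a(t) = (1 + λ(2−p)t)^{1/(2−p)} for t ∈ [0,T]. Let N ≥ 2 be an integer and dt > 0 with N·dt ≤ T, and define the vectors a = (a(0), a(dt), …, a((N−1)dt)) and b = (a(dt), a(2dt), …, a(N·dt)) in ℝ^N. Then a and b are not colinear; equivalently, the DMD error ‖b‖² − ⟨a, b⟩²/‖a‖² is strictly positive. -/
/-- Strict positivity of the DMD error for uniform sampling: the vectors of
consecutive uniform samples `a = (a(0),…,a((N−1)dt))` and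
`b = (a(dt),…,a(N·dt))` of the decay profile
`a(t) = (1+λ(2−p)t)^{1/(2−p)}` (with `N·dt ≤ T`, `T = −1/(λ(2−p))`) are not
colinear; equivalently the DMD error `‖b‖² − ⟨a,b⟩²/‖a‖²` is strictly
positive. -/
theorem stmt17 (p lam T : ℝ) (hp1 : 1 ≤ p) (hp2 : p < 2) (hlam : lam < 0)
    (hT : T = -1 / (lam * (2 - p)))
    (a : ℝ → ℝ) (ha : ∀ t : ℝ, a t = (1 + lam * (2 - p) * t) ^ ((1 : ℝ) / (2 - p)))
    (N : ℕ) (hN : 2 ≤ N) (dt : ℝ) (hdt : 0 < dt) (hNdt : (N : ℝ) * dt ≤ T)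
    (av bv : EuclideanSpace ℝ (Fin N))
    (hav : ∀ i : Fin N, av i = a ((i : ℝ) * dt))
    (hbv : ∀ i : Fin N, bv i = a (((i : ℝ) + 1) * dt)) :
    (¬ ∃ c : ℝ, bv = c • av) ∧
    0 < ‖bv‖ ^ 2 - (inner ℝ av bv : ℝ) ^ 2 / ‖av‖ ^ 2 := by
  set q : ℝ := lam * (2 - p) with hq
  have hqneg : q < 0 := mul_neg_of_neg_of_pos hlam (by linarith)
  have h2p : (0:ℝ) < 2 - p := by linarith
  have h2dt : 2 * dt ≤ T := by
    calc 2 * dt ≤ (N : ℝ) * dt := by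
          apply mul_le_mul_of_nonneg_right _ hdt.le
          exact_mod_cast hN
      _ ≤ T := hNdt
  have hqT : q * T = -1 := by
    rw [hT]; field_simp
    rw [div_self hqneg.ne]
  have h1p2s : 0 ≤ 1 + q * (2 * dt) := by
    have : q * T ≤ q * (2 * dt) := mul_le_mul_of_nonpos_left h2dt hqneg.le
    rw [hqT] at this; linarith
  have h1ps : 0 ≤ 1 + q * dt := by nlinarith
  have ha0 : a 0 = 1 := by rw [ha]; simp
  have hav0 : av ⟨0, by omega⟩ = 1 := by
    rw [hav]; simpa using ha0
  have havne : av ≠ 0 := by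
    intro h
    rw [h] at hav0
    simp at hav0
  -- main: not colinear
  have hnc : ¬ ∃ c : ℝ, bv = c • av := by
    rintro ⟨c, hc⟩
    have h0 := congrFun (congrArg WithLp.ofLp hc) ⟨0, by omega⟩
    have h1 := congrFun (congrArg WithLp.ofLp hc) ⟨1, by omega⟩
    simp only [WithLp.ofLp_smul, Pi.smul_apply, PiLp.smul_apply, smul_eq_mul] at h0 h1
    rw [hbv, hav] at h0
    rw [hbv, hav] at h1
    norm_num at h0 h1
    rw [ha0, mul_one] at h0
    rw [← h0] at h1
    rw [ha, ha] at h1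
    have key : (1 + q * (2*dt)) ^ ((1:ℝ)/(2-p)) = ((1 + q * dt) ^ ((1:ℝ)/(2-p)))^(2:ℕ) := by
      rw [pow_two]; exact h1
    have e1 : ((1 + q * (2*dt)) ^ ((1:ℝ)/(2-p))) ^ (2 - p) = 1 + q * (2*dt) := by
      rw [← Real.rpow_natCast _ 2] at *
      rw [← Real.rpow_mul h1p2s, one_div_mul_cancel (by linarith : (2:ℝ) - p ≠ 0),
        Real.rpow_one]
    have e2 : (((1 + q * dt) ^ ((1:ℝ)/(2-p)))^(2:ℕ)) ^ (2 - p) = (1 + q * dt)^(2:ℕ) := by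
      rw [← Real.rpow_natCast ((1 + q * dt) ^ ((1:ℝ)/(2-p))) 2,
        ← Real.rpow_mul h1ps, ← Real.rpow_natCast (1 + q*dt) 2, ← Real.rpow_mul h1ps]
      congr 1
      field_simp
    have hfin : 1 + q * (2*dt) = (1 + q*dt)^(2:ℕ) := by rw [← e1, ← e2, key]
    have : q * dt < 0 := mul_neg_of_neg_of_pos hqneg hdt
    nlinarith [hfin]
  refine ⟨hnc, ?_⟩
  have havnorm : 0 < ‖av‖ := norm_pos_iff.mpr havne
  have hcolin : ∀ r : ℝ, bv ≠ r • av := fun r h => hnc ⟨r, h⟩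
  have hcs : (inner ℝ av bv : ℝ)^2 < ‖av‖^2 * ‖bv‖^2 := by
    have hle := abs_real_inner_le_norm av bv
    rcases lt_or_eq_of_le hle with h | h
    · have h2 := abs_nonneg (inner ℝ av bv : ℝ)
      calc (inner ℝ av bv : ℝ)^2 = |(inner ℝ av bv : ℝ)|^2 := (sq_abs _).symm
        _ < (‖av‖ * ‖bv‖)^2 := by nlinarith
        _ = ‖av‖^2 * ‖bv‖^2 := by ring
    · exfalso
      rcases (abs_eq (by positivity : (0:ℝ) ≤ ‖av‖ * ‖bv‖)).mp h with h' | h'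
      · have heq := (inner_eq_norm_mul_iff_real (x := av) (y := bv)).mp h'
        apply hcolin (‖bv‖ / ‖av‖)
        rw [div_eq_mul_inv, mul_comm, mul_smul, heq, smul_smul,
          inv_mul_cancel₀ havnorm.ne', one_smul]
      · have h'' : (inner ℝ av (-bv) : ℝ) = ‖av‖ * ‖-bv‖ := by
          rw [inner_neg_right, norm_neg]; push_cast; linarith
        have heq := (inner_eq_norm_mul_iff_real (x := av) (y := -bv)).mp h''
        rw [norm_neg] at heq
        apply hcolin (-(‖bv‖ / ‖av‖))
        have hnb : -bv = (‖bv‖ / ‖av‖) • av := by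
          rw [div_eq_mul_inv, mul_comm, mul_smul, heq, smul_smul,
            inv_mul_cancel₀ havnorm.ne', one_smul]
        rw [neg_smul, ← hnb, neg_neg]
  have : (inner ℝ av bv : ℝ)^2 / ‖av‖^2 < ‖bv‖^2 := by
    rw [div_lt_iff₀ (by positivity)]
    nlinarith [hcs]
  linarith
end
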